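/- Let n ≥ 1 and let J_n ⊂ ℤ[x_1, …, x_n] be the ideal generated by the elementary symmetric polynomials σ_1, …, σ_n in x_1, …, x_n. Then for every k with 0 ≤ k ≤ n-1, the elementary symmetric polynomial σ_k(x_1, …, x_{n-1}) in the first n-1 variables satisfies σ_k(x_1, …, x_{n-1}) ≡ (-1)^k x_n^k (mod J_n). -/

import Mathlib

open MvPolynomial

lemma esymm_split (n : ℕ) (k : ℕ) :
    (esymm (Fin (n + 1)) ℤ (k + 1) : MvPolynomial (Fin (n + 1)) ℤ) =
      (∑ t ∈ Finset.powersetCard (k + 1)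
          ((Finset.univ : Finset (Fin (n + 1))).erase (Fin.last n)),
        ∏ i ∈ t, (X i : MvPolynomial (Fin (n + 1)) ℤ)) +
      X (Fin.last n) *
      (∑ t ∈ Finset.powersetCard k ((Finset.univ : Finset (Fin (n + 1))).erase (Fin.last n)),
        ∏ i ∈ t, (X i : MvPolynomial (Fin (n + 1)) ℤ)) := by
  have hmem : Fin.last n ∉ (Finset.univ : Finset (Fin (n + 1))).erase (Fin.last n) :=
    Finset.notMem_erase _ _
  have hps : Finset.powersetCard (k + 1) (Finset.univ : Finset (Fin (n + 1))) =
      Finset.powersetCard (k + 1) ((Finset.univ : Finset (Fin (n + 1))).erase (Fin.last n)) ∪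
      (Finset.powersetCard k ((Finset.univ : Finset (Fin (n + 1))).erase (Fin.last n))).image
        (insert (Fin.last n)) := by
    conv_lhs => rw [← Finset.insert_erase (Finset.mem_univ (Fin.last n))]
    exact Finset.powersetCard_succ_insert hmem k
  rw [esymm, hps]
  rw [Finset.sum_union]
  · congr 1
    rw [Finset.sum_image]
    · rw [Finset.mul_sum]
      apply Finset.sum_congr rfl
      intro t ht
      rw [Finset.mem_powersetCard] at ht
      rw [Finset.prod_insert (fun h => hmem (ht.1 h))]
    · intro a ha b hb hab
      rw [Finset.mem_coe, Finset.mem_powersetCard] at ha hb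
      have ha' : Fin.last n ∉ a := fun h => hmem (ha.1 h)
      have hb' : Fin.last n ∉ b := fun h => hmem (hb.1 h)
      rwa [Finset.insert_erase_invOn.2.injOn.eq_iff] at hab <;> simp [ha', hb']
  · rw [Finset.disjoint_right]
    intro t ht ht'
    simp only [Finset.mem_image] at ht
    obtain ⟨s, hs, rfl⟩ := ht
    rw [Finset.mem_powersetCard] at ht'
    exact hmem (ht'.1 (Finset.mem_insert_self _ _))

/-- In `ℤ[x_1, …, x_{n+1}]`, modulo the ideal `J` generated by the elementary symmetric
polynomials `σ_1, …, σ_{n+1}` of all the variables, the `k`-th elementary symmetric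
polynomial of the first `n` variables is congruent to `(-1)^k x_{n+1}^k`, for `0 ≤ k ≤ n`. -/
theorem stmt9 (n : ℕ) (k : ℕ) (hk : k ≤ n) :
    (∑ t ∈ Finset.powersetCard k ((Finset.univ : Finset (Fin (n + 1))).erase (Fin.last n)),
        ∏ i ∈ t, (X i : MvPolynomial (Fin (n + 1)) ℤ))
      - (-1) ^ k * (X (Fin.last n)) ^ k
    ∈ Ideal.span ((fun j => (esymm (Fin (n + 1)) ℤ j : MvPolynomial (Fin (n + 1)) ℤ)) ''
        Set.Icc 1 (n + 1)) := by
  induction k with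
  | zero => simp
  | succ k ih =>
    have ih' := ih (Nat.le_of_succ_le hk)
    have hesymm : (esymm (Fin (n + 1)) ℤ (k + 1) : MvPolynomial (Fin (n + 1)) ℤ) ∈
        Ideal.span ((fun j => (esymm (Fin (n + 1)) ℤ j : MvPolynomial (Fin (n + 1)) ℤ)) ''
          Set.Icc 1 (n + 1)) := by
      apply Ideal.subset_span
      exact ⟨k + 1, ⟨Nat.succ_le_succ (Nat.zero_le _), Nat.le_succ_of_le hk⟩, rfl⟩
    have key : (∑ t ∈ Finset.powersetCard (k + 1)
          ((Finset.univ : Finset (Fin (n + 1))).erase (Fin.last n)),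
          ∏ i ∈ t, (X i : MvPolynomial (Fin (n + 1)) ℤ))
        - (-1) ^ (k + 1) * (X (Fin.last n)) ^ (k + 1)
        = (esymm (Fin (n + 1)) ℤ (k + 1) : MvPolynomial (Fin (n + 1)) ℤ)
          - X (Fin.last n) *
            ((∑ t ∈ Finset.powersetCard k
                ((Finset.univ : Finset (Fin (n + 1))).erase (Fin.last n)),
              ∏ i ∈ t, (X i : MvPolynomial (Fin (n + 1)) ℤ))
            - (-1) ^ k * (X (Fin.last n)) ^ k) := by
      rw [esymm_split n k]; ring
    rw [key]
    exact Ideal.sub_mem _ hesymm (Ideal.mul_mem_left _ _ ih')
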